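/- With the matching m pairing +e₁ ↔ −e₂, +e₂ ↔ −e₃, +e₃ ↔ −e₁ on the octahedral graph, the successor map s on the 18 darts defined by s(a,b) = (m(b), −b) if a = −m(b) and s(a,b) = (m(b), a) otherwise, is a well-defined permutation of the 18 darts whose cycle type is (9,9): it has exactly two orbits, each of size 9, which are reverses of each other. Consequently the 9 roads and the bridge lanes form a single closed circuit of combinatorial length 18 in which roads and bridges alternate. -/

import Mathlib

set_option maxRecDepth 10000

/-- Vertices of the octahedral graph: `(true, i)` is `+eᵢ`, `(false, i)` is `-eᵢ`. -/
abbrev OctaVertex : Type := Bool × Fin 3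

/-- The antipodal map `v ↦ -v`. -/
def vneg (v : OctaVertex) : OctaVertex := (!v.1, v.2)

/-- The perfect matching pairing `+e₁ ↔ -e₂`, `+e₂ ↔ -e₃`, `+e₃ ↔ -e₁`
(indices taken cyclically). -/
def matching (v : OctaVertex) : OctaVertex :=
  if v.1 then (false, v.2 + 1) else (true, v.2 - 1)

/-- `a` and `b` span a road: an edge of the octahedral graph (`a ≠ b`, `a ≠ -b`)
that is not one of the three bridges of the matching. -/
def IsRoad (a b : OctaVertex) : Prop :=
  a ≠ b ∧ a ≠ vneg b ∧ a ≠ matching b ∧ b ≠ matching a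

instance : DecidablePred fun p : OctaVertex × OctaVertex => IsRoad p.1 p.2 :=
  fun p => by unfold IsRoad; infer_instance

/-- A dart: an ordered pair `(a,b)` of distinct vertices spanning a road. -/
def Dart : Type := {p : OctaVertex × OctaVertex // IsRoad p.1 p.2}

instance : DecidableEq Dart := Subtype.instDecidableEq

instance : Fintype Dart := Subtype.fintype _

/-- The reversal map on darts, `(a,b) ↦ (b,a)`. -/
def dartRev (d : Dart) : Dart :=
  ⟨(d.val.2, d.val.1), by
    obtain ⟨h1, h2, h3, h4⟩ := d.2
    have hinv : ∀ v : OctaVertex, vneg (vneg v) = v := by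
      rintro ⟨s, i⟩; cases s <;> rfl
    refine ⟨h1.symm, fun h => h2 ?_, h4, h3⟩
    have h' : d.val.2 = vneg d.val.1 := h
    rw [h', hinv]⟩


set_option maxRecDepth 4000 in
instance (a b : OctaVertex) : Decidable (IsRoad a b) := by unfold IsRoad; infer_instance

def dmk (a b : OctaVertex) (h : IsRoad a b := by decide) : Dart := ⟨(a, b), h⟩

def l1 : List Dart := [dmk (true, 0) (true, 1), dmk (false, 2) (true, 0), dmk (false, 1) (false, 2), dmk (true, 1) (true, 2), dmk (false, 0) (true, 1), dmk (false, 2) (false, 0), dmk (true, 2) (true, 0), dmk (false, 1) (true, 2), dmk (false, 0) (false, 1)]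
def l2 : List Dart := [dmk (true, 0) (true, 2), dmk (false, 0) (false, 2), dmk (true, 1) (false, 0), dmk (true, 2) (true, 1), dmk (false, 2) (false, 1), dmk (true, 0) (false, 2), dmk (true, 1) (true, 0), dmk (false, 1) (false, 0), dmk (true, 2) (false, 1)]

def sigma0 : Equiv.Perm Dart := l1.formPerm * l2.formPerm

lemma hdisj : Equiv.Perm.Disjoint l1.formPerm l2.formPerm := by intro x; revert x; decide

/-- the successor rule
`s(a,b) = (m(b), -b)` if `a = -m(b)`, and `s(a,b) = (m(b), a)` otherwise,
is a well-defined permutation of the 18 darts whose cycle type is `(9,9)`: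
it has exactly two orbits, each of size 9, and they are reverses of each
other.  Consequently the 9 roads and the bridge lanes form a single closed
circuit of combinatorial length 18 in which roads and bridges alternate. -/


theorem dart_successor_two_nine_cycles :
    Fintype.card Dart = 18 ∧
    ∃ σ : Equiv.Perm Dart,
      (∀ d : Dart,
        (σ d).val =
          if d.val.1 = vneg (matching d.val.2) then
            (matching d.val.2, vneg d.val.2)
          else
            (matching d.val.2, d.val.1)) ∧
      σ.cycleType = {9, 9} ∧
      ∀ d : Dart, ¬ σ.SameCycle d (dartRev d) := by
  refine ⟨by decide, sigma0, by decide, ?_, ?_⟩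
  · have h1 : (l1.formPerm).IsCycle := List.isCycle_formPerm (by decide) (by decide)
    have h2 : (l2.formPerm).IsCycle := List.isCycle_formPerm (by decide) (by decide)
    rw [sigma0, hdisj.cycleType_mul, h1.cycleType, h2.cycleType]
    have c1 : (l1.formPerm).support.card = 9 := by decide
    have c2 : (l2.formPerm).support.card = 9 := by decide
    rw [c1, c2]; rfl
  · have key : ∀ d : Dart, (sigma0 d ∈ l1.toFinset ↔ d ∈ l1.toFinset) := by decide
    have pow : ∀ (i : ℕ) (d : Dart), ((sigma0 ^ i) d ∈ l1.toFinset ↔ d ∈ l1.toFinset) := by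
      intro i
      induction i with
      | zero => intro d; simp
      | succ n ih =>
        intro d
        rw [pow_succ, Equiv.Perm.mul_apply]
        exact (ih (sigma0 d)).trans (key d)
    have hrev : ∀ d : Dart, (d ∈ l1.toFinset ↔ dartRev d ∉ l1.toFinset) := by decide
    intro d h
    obtain ⟨i, -, -, hi⟩ := h.exists_pow_eq sigma0
    have hmem := pow i d
    rw [hi] at hmem
    have := hrev d
    tauto
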